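/- Let M = diag(A₁, I_{n₂}) and N = diag(I_{n₁}, A₂) with σ(A₁) ⊂ 𝔻 and σ(A₂) ⊂ 𝔻, let P, X ∈ ℂ^{n×n} be Hermitian with XPX = X, PXP = P, and suppose the range of X is invariant under both M and N. Then, writing X in block form conformal with the decomposition ℂⁿ = ℂ^{n₁} ⊕ ℂ^{n₂}, the range of X decomposes as the direct sum of rng X ∩ (ℂ^{n₁} ⊕ {0}) and rng X ∩ ({0} ⊕ ℂ^{n₂}). -/

import Mathlib

open Matrix

/-- If `XPX = X`, `PXP = P`, `σ(A₁), σ(A₂) ⊂ 𝔻` and `rng X` is invariant under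
`M = diag(A₁, I)` and `N = diag(I, A₂)`, then `rng X` is the direct sum of
`rng X ∩ (ℂ^{n₁} ⊕ 0)` and `rng X ∩ (0 ⊕ ℂ^{n₂})`. -/
theorem stmt6 {n₁ n₂ : ℕ}
    (A₁ : Matrix (Fin n₁) (Fin n₁) ℂ) (A₂ : Matrix (Fin n₂) (Fin n₂) ℂ)
    (hA₁ : ∀ z ∈ spectrum ℂ A₁, ‖z‖ < 1) (hA₂ : ∀ z ∈ spectrum ℂ A₂, ‖z‖ < 1)
    (P X : Matrix (Fin n₁ ⊕ Fin n₂) (Fin n₁ ⊕ Fin n₂) ℂ)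
    (hP : P.IsHermitian) (hX : X.IsHermitian)
    (h1 : X * P * X = X) (h2 : P * X * P = P)
    (hMinv : ∀ x ∈ LinearMap.range X.mulVecLin,
      (Matrix.fromBlocks A₁ 0 0 (1 : Matrix (Fin n₂) (Fin n₂) ℂ)) *ᵥ x ∈
        LinearMap.range X.mulVecLin)
    (hNinv : ∀ x ∈ LinearMap.range X.mulVecLin,
      (Matrix.fromBlocks (1 : Matrix (Fin n₁) (Fin n₁) ℂ) 0 0 A₂) *ᵥ x ∈
        LinearMap.range X.mulVecLin) :
    LinearMap.range X.mulVecLin =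
      (LinearMap.range X.mulVecLin ⊓
        LinearMap.ker (LinearMap.funLeft ℂ ℂ (Sum.inr : Fin n₂ → Fin n₁ ⊕ Fin n₂))) ⊔
      (LinearMap.range X.mulVecLin ⊓
        LinearMap.ker (LinearMap.funLeft ℂ ℂ (Sum.inl : Fin n₁ → Fin n₁ ⊕ Fin n₂))) ∧
    (LinearMap.range X.mulVecLin ⊓
        LinearMap.ker (LinearMap.funLeft ℂ ℂ (Sum.inr : Fin n₂ → Fin n₁ ⊕ Fin n₂))) ⊓
      (LinearMap.range X.mulVecLin ⊓
        LinearMap.ker (LinearMap.funLeft ℂ ℂ (Sum.inl : Fin n₁ → Fin n₁ ⊕ Fin n₂))) = ⊥ := by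
  classical
  set V := LinearMap.range X.mulVecLin with hV
  set M := Matrix.fromBlocks A₁ 0 0 (1 : Matrix (Fin n₂) (Fin n₂) ℂ) with hM
  set B := M - 1 with hB
  have hBblock : B = Matrix.fromBlocks (A₁ - 1) 0 0 (0 : Matrix (Fin n₂) (Fin n₂) ℂ) := by
    rw [hB, hM, ← Matrix.fromBlocks_one]
    ext (i|i) (j|j) <;> simp [Matrix.fromBlocks, Matrix.sub_apply]
  have hBpow : ∀ k : ℕ, B ^ (k + 1)
      = Matrix.fromBlocks ((A₁ - 1) ^ (k + 1)) 0 0 (0 : Matrix (Fin n₂) (Fin n₂) ℂ) := by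
    intro k
    induction k with
    | zero => simpa using hBblock
    | succ k ih =>
      rw [pow_succ, ih, hBblock, Matrix.fromBlocks_multiply, ← pow_succ]
      simp
  -- invariance under B
  have hBinv : ∀ x ∈ V, B.mulVecLin x ∈ V := by
    intro x hx
    rw [Matrix.mulVecLin_apply, hB, Matrix.sub_mulVec, Matrix.one_mulVec]
    exact Submodule.sub_mem _ (hMinv x hx) hx
  set f : Module.End ℂ V := B.mulVecLin.restrict hBinv with hf
  have hfpow : ∀ (k : ℕ) (x : V), (((f ^ k) x : V) : (Fin n₁ ⊕ Fin n₂ → ℂ)) = (B ^ k) *ᵥ (x : (Fin n₁ ⊕ Fin n₂ → ℂ)) := by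
    intro k
    induction k with
    | zero => intro x; simp
    | succ k ih =>
      intro x
      rw [pow_succ', Module.End.mul_apply]
      have h1 : ((f ((f ^ k) x) : V) : (Fin n₁ ⊕ Fin n₂ → ℂ))
          = B *ᵥ (((f ^ k) x : V) : (Fin n₁ ⊕ Fin n₂ → ℂ)) := rfl
      rw [h1, ih, Matrix.mulVec_mulVec, ← pow_succ']
  -- A₁ - 1 is invertible
  have hu : IsUnit (A₁ - 1) := by
    have h1' : (1 : ℂ) ∉ spectrum ℂ A₁ := fun h => by simpa using hA₁ 1 h
    have := spectrum.notMem_iff.mp h1'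
    simpa using this.neg
  -- Fitting decomposition
  obtain ⟨k, hcompl, hk1⟩ :=
    (f.eventually_isCompl_ker_pow_range_pow.and (Filter.eventually_ge_atTop 1)).exists
  obtain ⟨j, rfl⟩ : ∃ j, k = j + 1 := ⟨k - 1, by omega⟩
  set C := (A₁ - 1) ^ (j + 1) with hC
  have hCu : IsUnit C := hu.pow _
  have hCinj : ∀ v : Fin n₁ → ℂ, C *ᵥ v = 0 → v = 0 := by
    intro v hv
    have hinv : C⁻¹ * C = 1 := Matrix.nonsing_inv_mul C (Matrix.isUnit_iff_isUnit_det C |>.mp hCu)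
    calc v = (C⁻¹ * C) *ᵥ v := by rw [hinv, Matrix.one_mulVec]
    _ = C⁻¹ *ᵥ (C *ᵥ v) := (Matrix.mulVec_mulVec _ _ _).symm
    _ = 0 := by rw [hv, Matrix.mulVec_zero]
  -- kernel elements are supported on inr
  have hker : ∀ x : V, x ∈ LinearMap.ker (f ^ (j + 1)) →
      (x : (Fin n₁ ⊕ Fin n₂ → ℂ)) ∈ LinearMap.ker (LinearMap.funLeft ℂ ℂ (Sum.inl : Fin n₁ → Fin n₁ ⊕ Fin n₂)) := by
    intro x hx
    have h0 : (B ^ (j + 1)) *ᵥ (x : (Fin n₁ ⊕ Fin n₂ → ℂ)) = 0 := by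
      rw [← hfpow]
      rw [LinearMap.mem_ker] at hx
      rw [hx]; rfl
    rw [hBpow] at h0
    have hxe : (x : (Fin n₁ ⊕ Fin n₂ → ℂ)) = Sum.elim ((x : (Fin n₁ ⊕ Fin n₂ → ℂ)) ∘ Sum.inl) ((x : (Fin n₁ ⊕ Fin n₂ → ℂ)) ∘ Sum.inr) := (Sum.elim_comp_inl_inr _).symm
    rw [hxe, Matrix.fromBlocks_mulVec] at h0
    have hC0 : C *ᵥ ((x : (Fin n₁ ⊕ Fin n₂ → ℂ)) ∘ Sum.inl) = 0 := by
      funext i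
      have := congrFun h0 (Sum.inl i)
      simpa [hC] using this
    have := hCinj _ hC0
    rw [LinearMap.mem_ker]
    funext i
    exact congrFun this i
  -- range elements are supported on inl
  have hrng : ∀ x : V, x ∈ LinearMap.range (f ^ (j + 1)) →
      (x : (Fin n₁ ⊕ Fin n₂ → ℂ)) ∈ LinearMap.ker (LinearMap.funLeft ℂ ℂ (Sum.inr : Fin n₂ → Fin n₁ ⊕ Fin n₂)) := by
    rintro x ⟨y, rfl⟩
    rw [LinearMap.mem_ker]
    funext i
    have h := hfpow (j + 1) y
    rw [hBpow] at h
    have hye : ((y : V) : (Fin n₁ ⊕ Fin n₂ → ℂ)) = Sum.elim (((y : V) : (Fin n₁ ⊕ Fin n₂ → ℂ)) ∘ Sum.inl) (((y : V) : (Fin n₁ ⊕ Fin n₂ → ℂ)) ∘ Sum.inr) := (Sum.elim_comp_inl_inr _).symm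
    rw [hye, Matrix.fromBlocks_mulVec] at h
    have := congrFun h (Sum.inr i)
    simpa using this
  constructor
  · apply le_antisymm
    · intro x hx
      obtain ⟨a, b, ha, hb, hab⟩ :=
        Submodule.codisjoint_iff_exists_add_eq.mp hcompl.codisjoint (⟨x, hx⟩ : V)
      rw [Submodule.mem_sup]
      refine ⟨(b : (Fin n₁ ⊕ Fin n₂ → ℂ)), ⟨b.2, hrng b hb⟩,
        (a : (Fin n₁ ⊕ Fin n₂ → ℂ)), ⟨a.2, hker a ha⟩, ?_⟩
      have := congrArg (Subtype.val) hab
      simpa [add_comm] using this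
    · exact sup_le inf_le_left inf_le_left
  · rw [eq_bot_iff]
    rintro x ⟨⟨-, hr⟩, -, hl⟩
    simp only [SetLike.mem_coe, LinearMap.mem_ker] at hr hl
    simp only [Submodule.mem_bot]
    funext i
    cases i with
    | inl i => exact congrFun hl i
    | inr i => exact congrFun hr i
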